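/- arXiv:2601.01417 — 2 statements merged into one kernel-verified Lean document; each statement's English description precedes it below -/
import Mathlib

section
/- Let w ∈ ℝᵈ with w_ℓ ≠ 0 for some ℓ ≥ r+1, and let w_min ≤ |w_i| ≤ w_max for all i with w_i ≠ 0, where w_min > 0, and set W = w_max/w_min ≥ 1. Define x_i = -r·(2W)^(i-r) for r+1 ≤ i ≤ d. Then for any x₁,…,x_r ∈ [0,1], |Σ_{i=1}^{ℓ-1} x_i w_i| < |x_ℓ w_ℓ|, assuming w_i = 0 for i > ℓ in the truncated sum and that ℓ is the largest index with w_ℓ ≠ 0. -/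
theorem ell_term_dominates (d r ℓ : ℕ) (hr : 1 ≤ r) (hrℓ : r + 1 ≤ ℓ) (hℓd : ℓ ≤ d)
    (w : ℕ → ℝ) (wmin wmax W : ℝ) (hwmin : 0 < wmin) (hW : W = wmax / wmin) (hW1 : 1 ≤ W)
    (hbounds : ∀ i, 1 ≤ i → i ≤ d → w i ≠ 0 → wmin ≤ |w i| ∧ |w i| ≤ wmax)
    (hwℓ : w ℓ ≠ 0) (hlargest : ∀ i, ℓ < i → w i = 0)
    (x : ℕ → ℝ)
    (hxneg : ∀ i, r + 1 ≤ i → i ≤ d → x i = -(r : ℝ) * (2 * W) ^ (i - r))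
    (hxbox : ∀ i, 1 ≤ i → i ≤ r → x i ∈ Set.Icc (0 : ℝ) 1) :
    |∑ i ∈ Finset.Icc 1 (ℓ - 1), x i * w i| < |x ℓ * w ℓ| := by
  have hℓ1 : 1 ≤ ℓ := by omega
  have hwℓb := hbounds ℓ hℓ1 hℓd hwℓ
  have hwmax : 0 < wmax := lt_of_lt_of_le hwmin (le_trans hwℓb.1 hwℓb.2)
  have hwmaxeq : wmax = W * wmin := by
    rw [hW]; field_simp
  have habs : ∀ i, 1 ≤ i → i ≤ d → |w i| ≤ wmax := by
    intro i h1 h2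
    by_cases h : w i = 0
    · simp [h]; linarith
    · exact (hbounds i h1 h2 h).2
  have hq0 : (0:ℝ) < 2 * W := by linarith
  have hq1 : (1:ℝ) ≤ 2 * W := by linarith
  have hr1 : (1:ℝ) ≤ (r:ℝ) := by exact_mod_cast hr
  set m : ℕ := ℓ - r with hmdef
  have hm1 : 1 ≤ m := by omega
  set S : ℝ := ∑ j ∈ Finset.range m, (2 * W) ^ j with hSdef
  have hS0 : 0 ≤ S := Finset.sum_nonneg fun j _ => le_of_lt (pow_pos hq0 j)
  have hqm1 : (1:ℝ) ≤ (2 * W) ^ m := one_le_pow₀ hq1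
  have hgeo : S * (2 * W - 1) = (2 * W) ^ m - 1 := geom_sum_mul (2 * W) m
  -- key inequality : W * S < (2W)^m
  have hkey : W * S < (2 * W) ^ m := by
    nlinarith [mul_nonneg (sub_nonneg.mpr hW1) (le_trans zero_le_one hqm1)]
  -- bound the left sum
  have e1 : Finset.Icc 1 (ℓ - 1) = Finset.Ioc 0 (ℓ - 1) := by
    ext i; simp; omega
  have hL : |∑ i ∈ Finset.Icc 1 (ℓ - 1), x i * w i| ≤ (r : ℝ) * wmax * S := by
    calc |∑ i ∈ Finset.Icc 1 (ℓ - 1), x i * w i|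
        ≤ ∑ i ∈ Finset.Icc 1 (ℓ - 1), |x i * w i| := Finset.abs_sum_le_sum_abs _ _
      _ = ∑ i ∈ Finset.Ioc 0 r, |x i * w i| + ∑ i ∈ Finset.Ioc r (ℓ - 1), |x i * w i| := by
          rw [e1, ← Finset.sum_Ioc_consecutive _ (Nat.zero_le r) (show r ≤ ℓ - 1 by omega)]
      _ ≤ (r:ℝ) * wmax + ∑ i ∈ Finset.Ioc r (ℓ - 1), (r:ℝ) * wmax * (2 * W) ^ (i - r) := by
          gcongr with i hi
          · -- first block: sum of r terms each ≤ wmax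
            have h1 : ∑ i ∈ Finset.Ioc 0 r, |x i * w i| ≤ (Finset.Ioc 0 r).card • wmax := by
              apply Finset.sum_le_card_nsmul
              intro i hi
              simp only [Finset.mem_Ioc] at hi
              have hx := hxbox i hi.1 hi.2
              simp only [Set.mem_Icc] at hx
              have hwi : |w i| ≤ wmax := habs i hi.1 (by omega)
              rw [abs_mul, abs_of_nonneg hx.1]
              calc x i * |w i| ≤ 1 * wmax := by
                    apply mul_le_mul hx.2 hwi (abs_nonneg _) zero_le_one
                _ = wmax := one_mul _
            simpa [Nat.card_Ioc, nsmul_eq_mul] using h1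
          · -- second block termwise
            simp only [Finset.mem_Ioc] at hi
            have hxi := hxneg i (by omega) (by omega)
            have hwi : |w i| ≤ wmax := habs i (by omega) (by omega)
            rw [hxi, abs_mul, abs_mul, abs_neg, abs_of_nonneg (by positivity : (0:ℝ) ≤ (r:ℝ)),
              abs_of_pos (pow_pos hq0 _)]
            calc (r:ℝ) * (2 * W) ^ (i - r) * |w i|
                ≤ (r:ℝ) * (2 * W) ^ (i - r) * wmax := by
                  apply mul_le_mul_of_nonneg_left hwi
                  positivity
              _ = (r:ℝ) * wmax * (2 * W) ^ (i - r) := by ring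
      _ = (r:ℝ) * wmax + (r:ℝ) * wmax * ∑ j ∈ Finset.range (m - 1), (2 * W) ^ (j + 1) := by
          have e2 : Finset.Ioc r (ℓ - 1) = Finset.Ico (r + 1) ℓ := by
            ext i; simp; omega
          have e3 : ∑ i ∈ Finset.Ioc r (ℓ - 1), (2 * W) ^ (i - r)
              = ∑ j ∈ Finset.range (m - 1), (2 * W) ^ (j + 1) := by
            rw [e2, Finset.sum_Ico_eq_sum_range, show ℓ - (r + 1) = m - 1 by omega]
            exact Finset.sum_congr rfl fun j _ => by rw [show r + 1 + j - r = j + 1 by omega]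
          rw [← Finset.mul_sum, e3]
      _ = (r:ℝ) * wmax * S := by
          have e4 : S = 1 + ∑ j ∈ Finset.range (m - 1), (2 * W) ^ (j + 1) := by
            rw [hSdef, show m = (m - 1) + 1 by omega, Finset.sum_range_succ']
            simp [add_comm]
          rw [e4]; ring
  -- the ℓ-th term
  have hxℓ : x ℓ = -(r:ℝ) * (2 * W) ^ m := hxneg ℓ hrℓ hℓd
  have hR : (r:ℝ) * (2 * W) ^ m * wmin ≤ |x ℓ * w ℓ| := by
    rw [hxℓ, abs_mul, abs_mul, abs_neg, abs_of_nonneg (by positivity : (0:ℝ) ≤ (r:ℝ)),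
      abs_of_pos (pow_pos hq0 _)]
    gcongr
    exact hwℓb.1
  refine lt_of_le_of_lt hL (lt_of_lt_of_le ?_ hR)
  rw [hwmaxeq]
  have hrw : (0:ℝ) < (r:ℝ) * wmin := by positivity
  calc (r:ℝ) * (W * wmin) * S = ((r:ℝ) * wmin) * (W * S) := by ring
    _ < ((r:ℝ) * wmin) * ((2 * W) ^ m) := by
        exact mul_lt_mul_of_pos_left hkey hrw
    _ = (r:ℝ) * (2 * W) ^ m * wmin := by ring
end

section
/- Let w ∈ ℝᵈ, let ℓ be the largest index with w_ℓ ≠ 0, and suppose ℓ ≥ r+1. With x_i = -r·(2W)^(i-r) for r+1 ≤ i ≤ d (where W = w_max/w_min as above) and any x₁,…,x_r ∈ [0,1], the sign of Σ_{i=1}^d x_i w_i equals -sign(w_ℓ). -/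
theorem sign_determined_by_ell (d r ℓ : ℕ) (hr : 1 ≤ r) (hrℓ : r + 1 ≤ ℓ) (hℓd : ℓ ≤ d)
    (w : ℕ → ℝ) (wmin wmax W : ℝ) (hwmin : 0 < wmin) (hW : W = wmax / wmin) (hW1 : 1 ≤ W)
    (hbounds : ∀ i, 1 ≤ i → i ≤ d → w i ≠ 0 → wmin ≤ |w i| ∧ |w i| ≤ wmax)
    (hwℓ : w ℓ ≠ 0) (hlargest : ∀ i, ℓ < i → w i = 0)
    (x : ℕ → ℝ)
    (hxneg : ∀ i, r + 1 ≤ i → i ≤ d → x i = -(r : ℝ) * (2 * W) ^ (i - r))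
    (hxbox : ∀ i, 1 ≤ i → i ≤ r → x i ∈ Set.Icc (0 : ℝ) 1) :
    Real.sign (∑ i ∈ Finset.Icc 1 d, x i * w i) = -Real.sign (w ℓ) := by
  set q : ℝ := 2 * W with hq
  have hq2 : (2:ℝ) ≤ q := by simp [hq]; linarith
  have hq1 : (1:ℝ) < q := by linarith
  set m := ℓ - r with hm
  have hm1 : 1 ≤ m := by omega
  have hwmaxeq : wmax = W * wmin := by
    rw [hW]; field_simp
  have hub : ∀ i, 1 ≤ i → i ≤ d → |w i| ≤ W * wmin := by
    intro i h1 h2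
    by_cases h : w i = 0
    · simp [h]; positivity
    · rw [← hwmaxeq]; exact (hbounds i h1 h2 h).2
  have hxℓ : x ℓ = -(r:ℝ) * q ^ m := by
    rw [hxneg ℓ hrℓ hℓd]
  -- rewrite Icc as Ioc
  have hIcc : ∀ n : ℕ, Finset.Icc 1 n = Finset.Ioc 0 n := by
    intro n; ext i; simp; omega
  rw [hIcc]
  have hℓmem : ℓ ∈ Finset.Ioc 0 d := by simp; omega
  rw [← Finset.add_sum_erase _ _ hℓmem]
  set R := ∑ i ∈ (Finset.Ioc 0 d).erase ℓ, x i * w i with hR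
  -- R equals sum over Ioc 0 (ℓ-1)
  have hRE : R = ∑ i ∈ Finset.Ioc 0 (ℓ-1), x i * w i := by
    rw [hR]
    refine (Finset.sum_subset ?_ ?_).symm
    · intro i hi
      simp at hi ⊢
      omega
    · intro i hi hni
      simp at hi hni
      have : ℓ < i := by omega
      rw [hlargest i this]; ring
  -- key bound
  have hq0 : (0:ℝ) < q := by linarith
  have hqm0 : (0:ℝ) < q ^ m := by positivity
  have key : |R| < (r:ℝ) * wmin * q ^ m := by
    have hsplit : ∑ i ∈ Finset.Ioc 0 (ℓ-1), |x i * w i|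
        = ∑ i ∈ Finset.Ioc 0 r, |x i * w i| + ∑ i ∈ Finset.Ioc r (ℓ-1), |x i * w i| := by
      rw [Finset.sum_Ioc_consecutive]
      · omega
      · omega
    have hb1 : ∑ i ∈ Finset.Ioc 0 r, |x i * w i| ≤ (r:ℝ) * (W * wmin) := by
      calc ∑ i ∈ Finset.Ioc 0 r, |x i * w i|
          ≤ ∑ i ∈ Finset.Ioc 0 r, W * wmin := by
            apply Finset.sum_le_sum
            intro i hi
            simp at hi
            obtain ⟨hi1, hi2⟩ := hi
            have hx := hxbox i hi1 hi2
            simp [Set.mem_Icc] at hx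
            have hxi : |x i| ≤ 1 := by rw [abs_of_nonneg hx.1]; exact hx.2
            have hwi : |w i| ≤ W * wmin := hub i hi1 (by omega)
            rw [abs_mul]
            calc |x i| * |w i| ≤ 1 * (W * wmin) := by
                  apply mul_le_mul hxi hwi (abs_nonneg _) (by norm_num)
              _ = W * wmin := by ring
        _ = (r:ℝ) * (W * wmin) := by
            rw [Finset.sum_const, Nat.card_Ioc]
            simp
    have hb2 : ∑ i ∈ Finset.Ioc r (ℓ-1), |x i * w i|
        ≤ (r:ℝ) * (W * wmin) * ∑ i ∈ Finset.range (m-1), q ^ (i+1) := by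
      calc ∑ i ∈ Finset.Ioc r (ℓ-1), |x i * w i|
          ≤ ∑ i ∈ Finset.Ioc r (ℓ-1), (r:ℝ) * (W * wmin) * q ^ (i - r) := by
            apply Finset.sum_le_sum
            intro i hi
            simp at hi
            obtain ⟨hi1, hi2⟩ := hi
            rw [hxneg i (by omega) (by omega)]
            have habsx : |-(r:ℝ) * q ^ (i-r) * w i| = (r:ℝ) * q ^ (i-r) * |w i| := by
              rw [abs_mul, abs_mul, abs_neg, abs_of_nonneg (by positivity : (0:ℝ) ≤ (r:ℝ)),
                abs_of_nonneg (le_of_lt (pow_pos hq0 _))]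
            rw [habsx]
            have hwi : |w i| ≤ W * wmin := hub i (by omega) (by omega)
            calc (r:ℝ) * q ^ (i-r) * |w i| ≤ (r:ℝ) * q ^ (i-r) * (W * wmin) := by
                  apply mul_le_mul_of_nonneg_left hwi (by positivity)
              _ = (r:ℝ) * (W * wmin) * q ^ (i-r) := by ring
        _ = (r:ℝ) * (W * wmin) * ∑ i ∈ Finset.Ioc r (ℓ-1), q ^ (i - r) := by
            rw [Finset.mul_sum]
        _ = (r:ℝ) * (W * wmin) * ∑ i ∈ Finset.range (m-1), q ^ (i+1) := by
            congr 1
            have hIoc : Finset.Ioc r (ℓ-1) = Finset.Ico (r+1) ℓ := by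
              ext i; simp; omega
            rw [hIoc, Finset.sum_Ico_eq_sum_range]
            have hcard : ℓ - (r+1) = m - 1 := by omega
            rw [hcard]
            apply Finset.sum_congr rfl
            intro i _
            congr 1
            omega
    have hgeom : (1:ℝ) + ∑ i ∈ Finset.range (m-1), q ^ (i+1) = ∑ i ∈ Finset.range m, q ^ i := by
      have : m = (m-1) + 1 := by omega
      rw [this, Finset.sum_range_succ']
      simp [add_comm]
    have hgeomval : ∑ i ∈ Finset.range m, q ^ i = (q ^ m - 1) / (q - 1) :=
      geom_sum_eq (by linarith) m
    calc |R| = |∑ i ∈ Finset.Ioc 0 (ℓ-1), x i * w i| := by rw [hRE]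
      _ ≤ ∑ i ∈ Finset.Ioc 0 (ℓ-1), |x i * w i| := Finset.abs_sum_le_sum_abs _ _
      _ = ∑ i ∈ Finset.Ioc 0 r, |x i * w i| + ∑ i ∈ Finset.Ioc r (ℓ-1), |x i * w i| := hsplit
      _ ≤ (r:ℝ) * (W * wmin) + (r:ℝ) * (W * wmin) * ∑ i ∈ Finset.range (m-1), q ^ (i+1) :=
          add_le_add hb1 hb2
      _ = (r:ℝ) * (W * wmin) * ∑ i ∈ Finset.range m, q ^ i := by
          rw [← hgeom]; ring
      _ = (r:ℝ) * (W * wmin) * ((q ^ m - 1) / (q - 1)) := by rw [hgeomval]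
      _ ≤ (r:ℝ) * wmin * (q ^ m - 1) := by
          have hqm1 : (0:ℝ) ≤ q ^ m - 1 := by
            have h := pow_le_pow_left₀ (by norm_num : (0:ℝ) ≤ 1) (le_of_lt hq1) m
            rw [one_pow] at h
            linarith
          have hd : (0:ℝ) < q - 1 := by linarith
          have hWle : W / (q-1) ≤ 1 := by
            rw [div_le_one hd]
            simp only [hq]
            linarith
          have heq : (r:ℝ) * (W * wmin) * ((q^m-1)/(q-1))
              = ((r:ℝ)*wmin*(q^m-1)) * (W/(q-1)) := by ring
          rw [heq]
          have hC : (0:ℝ) ≤ (r:ℝ)*wmin*(q^m-1) :=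
            mul_nonneg (mul_nonneg (Nat.cast_nonneg r) hwmin.le) hqm1
          calc ((r:ℝ)*wmin*(q^m-1)) * (W/(q-1)) ≤ ((r:ℝ)*wmin*(q^m-1)) * 1 :=
                mul_le_mul_of_nonneg_left hWle hC
            _ = (r:ℝ)*wmin*(q^m-1) := by ring
      _ < (r:ℝ) * wmin * q ^ m := by
          have hr0 : (0:ℝ) < (r:ℝ) := by exact_mod_cast hr
          nlinarith
  -- term at ℓ
  have hwℓlb : wmin ≤ |w ℓ| := (hbounds ℓ (by omega) hℓd hwℓ).1
  have hterm : |x ℓ * w ℓ| = (r:ℝ) * q ^ m * |w ℓ| := by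
    rw [hxℓ, abs_mul, neg_mul, abs_neg, abs_mul]
    rw [abs_of_nonneg (by positivity : (0:ℝ) ≤ (r:ℝ)), abs_of_nonneg (le_of_lt hqm0)]
  have htermlb : (r:ℝ) * wmin * q ^ m ≤ |x ℓ * w ℓ| := by
    have hr0 : (0:ℝ) ≤ (r:ℝ) := by positivity
    calc (r:ℝ) * wmin * q ^ m = (r:ℝ) * q ^ m * wmin := by ring
      _ ≤ (r:ℝ) * q ^ m * |w ℓ| :=
          mul_le_mul_of_nonneg_left hwℓlb (mul_nonneg hr0 hqm0.le)
      _ = |x ℓ * w ℓ| := hterm.symm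
  have hRlt : |R| < |x ℓ * w ℓ| := lt_of_lt_of_le key htermlb
  rcases hwℓ.lt_or_gt with hneg | hpos
  · -- w ℓ < 0 : x ℓ * w ℓ > 0, sum > 0
    have hxw : 0 < x ℓ * w ℓ := by
      rw [hxℓ]
      have hr0 : (0:ℝ) < (r:ℝ) := by exact_mod_cast hr
      nlinarith [mul_pos (mul_pos hr0 hqm0) (neg_pos.mpr hneg)]
    have habs : |x ℓ * w ℓ| = x ℓ * w ℓ := abs_of_pos hxw
    have : 0 < x ℓ * w ℓ + R := by
      have := neg_abs_le R
      rw [habs] at hRlt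
      linarith
    rw [Real.sign_of_pos this, Real.sign_of_neg hneg]
    norm_num
  · have hxw : x ℓ * w ℓ < 0 := by
      rw [hxℓ]
      have hr0 : (0:ℝ) < (r:ℝ) := by exact_mod_cast hr
      nlinarith [mul_pos (mul_pos hr0 hqm0) hpos]
    have habs : |x ℓ * w ℓ| = -(x ℓ * w ℓ) := abs_of_neg hxw
    have : x ℓ * w ℓ + R < 0 := by
      have := le_abs_self R
      rw [habs] at hRlt
      linarith
    rw [Real.sign_of_neg this, Real.sign_of_pos hpos]
end
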